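/- For every positive integer m, the series ∑_{n=0}^∞ [∑_{k=0}^{m-1} L_{2(m-k)(2m+1)^n}] / L_{(2m+1)^{n+1}} converges with sum 1. -/

import Mathlib

open goldenRatio

/-- The Lucas numbers: L 0 = 2, L 1 = 1, L (n+2) = L n + L (n+1). -/
def lucas : ℕ → ℕ
  | 0 => 2
  | 1 => 1
  | n + 2 => lucas n + lucas (n + 1)

lemma lucas_pos : ∀ n, 0 < lucas n
  | 0 => by simp [lucas]
  | 1 => by simp [lucas]
  | n + 2 => by
    have h1 := lucas_pos n
    simp only [lucas]; omega

lemma lucas_ge : ∀ n, n ≤ lucas n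
  | 0 => by simp [lucas]
  | 1 => by simp [lucas]
  | n + 2 => by
    have h1 := lucas_ge n
    have h2 := lucas_ge (n + 1)
    have h3 := lucas_pos n
    simp only [lucas]; omega

lemma lucas_binet : ∀ n, (lucas n : ℝ) = φ ^ n + ψ ^ n
  | 0 => by norm_num [lucas]
  | 1 => by
    show ((1 : ℕ) : ℝ) = φ ^ 1 + ψ ^ 1
    rw [pow_one, pow_one, Real.goldenRatio_add_goldenConj]; norm_num
  | n + 2 => by
    have h1 := lucas_binet n
    have h2 := lucas_binet (n + 1)
    have hφ : φ ^ (n + 2) = φ ^ n + φ ^ (n + 1) := by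
      have : φ ^ (n + 2) = φ ^ n * φ ^ 2 := by ring
      rw [this, Real.goldenRatio_sq]; ring
    have hψ : ψ ^ (n + 2) = ψ ^ n + ψ ^ (n + 1) := by
      have : ψ ^ (n + 2) = ψ ^ n * ψ ^ 2 := by ring
      rw [this, Real.goldenConj_sq]; ring
    show ((lucas n + lucas (n + 1) : ℕ) : ℝ) = _
    push_cast
    rw [h1, h2, hφ, hψ]; ring

lemma lucas_mul (b c : ℕ) (hb : Odd b) :
    (lucas (c + 2 * b) : ℝ) = lucas (c + b) * lucas b + lucas c := by
  have hXY : φ ^ b * ψ ^ b = -1 := by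
    rw [← mul_pow, Real.goldenRatio_mul_goldenConj, hb.neg_one_pow]
  rw [lucas_binet, lucas_binet, lucas_binet, lucas_binet]
  linear_combination (-(φ ^ c) - ψ ^ c) * hXY

lemma sum_lucas (N : ℕ) (hN : Odd N) : ∀ m : ℕ,
    ((∑ k ∈ Finset.range m, (lucas (2 * (k + 1) * N) : ℝ)) + 1) * lucas N
      = lucas ((2 * m + 1) * N)
  | 0 => by simp
  | m + 1 => by
    have ih := sum_lucas N hN m
    rw [Finset.sum_range_succ]
    have hmul := lucas_mul N ((2 * m + 1) * N) hN
    have e1 : (2 * m + 1) * N + 2 * N = (2 * (m + 1) + 1) * N := by ring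
    have e2 : (2 * m + 1) * N + N = 2 * (m + 1) * N := by ring
    rw [e1, e2] at hmul
    rw [hmul, ← ih]; ring

theorem stmt15 (m : ℕ) (hm : 0 < m) :
    HasSum
      (fun n : ℕ =>
        (∑ k ∈ Finset.range m, (lucas (2 * (m - k) * (2 * m + 1) ^ n) : ℝ)) /
          (lucas ((2 * m + 1) ^ (n + 1)) : ℝ))
      1 := by
  set f : ℕ → ℝ := fun n =>
    (∑ k ∈ Finset.range m, (lucas (2 * (m - k) * (2 * m + 1) ^ n) : ℝ)) /
      (lucas ((2 * m + 1) ^ (n + 1)) : ℝ) with hf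
  set a : ℕ → ℝ := fun n => ((lucas ((2 * m + 1) ^ n) : ℝ))⁻¹ with ha
  have hLpos : ∀ n : ℕ, (0 : ℝ) < (lucas n : ℝ) := fun n => by
    exact_mod_cast lucas_pos n
  have hodd : ∀ n : ℕ, Odd ((2 * m + 1) ^ n) := fun n => (odd_two_mul_add_one m).pow
  have hkey : ∀ n, f n = a n - a (n + 1) := by
    intro n
    set N := (2 * m + 1) ^ n with hN
    have hsum := sum_lucas N (hodd n) m
    have hreflect : (∑ k ∈ Finset.range m, (lucas (2 * (m - k) * N) : ℝ))
        = ∑ k ∈ Finset.range m, (lucas (2 * (k + 1) * N) : ℝ) := by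
      rw [← Finset.sum_range_reflect (fun j => (lucas (2 * (j + 1) * N) : ℝ)) m]
      refine Finset.sum_congr rfl fun k hk => ?_
      have hk' : k < m := Finset.mem_range.mp hk
      have h3 : m - k = (m - 1 - k) + 1 := by omega
      simp only [h3]
    have hpow : (2 * m + 1) ^ (n + 1) = (2 * m + 1) * N := by
      rw [pow_succ, mul_comm]
    have h1 : (0 : ℝ) < (lucas N : ℝ) := hLpos N
    have h2 : (0 : ℝ) < (lucas ((2 * m + 1) * N) : ℝ) := hLpos _
    simp only [hf, ha, hpow, ← hN]
    rw [hreflect]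
    rw [div_eq_iff h2.ne']
    field_simp
    linear_combination hsum
  have hpartial : ∀ n, ∑ i ∈ Finset.range n, f i = a 0 - a n := by
    intro n
    simp only [hkey]
    exact Finset.sum_range_sub' a n
  have ha0 : a 0 = 1 := by norm_num [ha, lucas]
  have hnonneg : ∀ n, 0 ≤ f n := by
    intro n
    apply div_nonneg
    · exact Finset.sum_nonneg fun k _ => by positivity
    · exact (hLpos _).le
  rw [hasSum_iff_tendsto_nat_of_nonneg hnonneg]
  have hlim : Filter.Tendsto a Filter.atTop (nhds 0) := by
    apply Filter.Tendsto.comp tendsto_inv_atTop_zero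
    apply Filter.Tendsto.comp tendsto_natCast_atTop_atTop
    apply Filter.tendsto_atTop_mono (fun n => ?_) Filter.tendsto_id
    calc (n : ℕ) ≤ (2 * m + 1) ^ n := Nat.le_of_lt (Nat.lt_pow_self (n := n) (by omega))
      _ ≤ lucas ((2 * m + 1) ^ n) := lucas_ge _
  have : Filter.Tendsto (fun n => a 0 - a n) Filter.atTop (nhds (a 0 - 0)) :=
    Filter.Tendsto.sub tendsto_const_nhds hlim
  simpa only [hpartial, ha0, sub_zero] using this
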